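/- Let a ∈ ℂ with |a| < 1 and β ∈ ℝ, let M(z) = e^{iβ}·(z − a)/(1 − conj(a)·z), and let η : ℝ → ℝ be a continuous function with e^{iη(t)} = M(e^{it}) for all t ∈ ℝ. Let −π < θ_1 < θ_2 < ⋯ < θ_n ≤ π with θ_{n+1} := θ_1 + 2π, and let f : ℝ → ℝ be strictly convex on (0,∞) with f(1) = 0. For u in the open unit disk write φ_j(u) = ∫_{θ_j}^{θ_{j+1}} P(u,t) dt and φ̃_j(u) = ∫_{η(θ_j)}^{η(θ_{j+1})} P(u,t) dt. Then for all z, y in the open unit disk: Σ_{j=1}^n φ̃_j(M(z))·f(φ̃_j(M(y))/φ̃_j(M(z))) = Σ_{j=1}^n φ_j(z)·f(φ_j(y)/φ_j(z)). (Conformal invariance of the reduced f-divergence distance.) -/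

import Mathlib

/-- The Poisson kernel of the unit disk:
`P(z,θ) = (1/(2π)) · (1 − |z|²)/|z − e^{iθ}|²`. -/
noncomputable def poisson (z : ℂ) (θ : ℝ) : ℝ :=
  (1 / (2 * Real.pi)) * (1 - ‖z‖ ^ 2) /
    ‖z - Complex.exp (θ * Complex.I)‖ ^ 2

section AuxConformal
open Complex

lemma HasDerivAt.cim {F : ℝ → ℂ} {F' : ℂ} {t : ℝ} (h : HasDerivAt F F' t) :
    HasDerivAt (fun s => (F s).im) F'.im t := by
  have h2 := Complex.imCLM.hasFDerivAt.comp_hasDerivAt t h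
  simp only [Complex.imCLM_apply] at h2
  exact h2

lemma abs_exp_mul_I (t : ℝ) : ‖Complex.exp (t * I)‖ = 1 := by
  simp [Complex.norm_exp]

lemma exp_mul_I_ne (z : ℂ) (hz : ‖z‖ < 1) (t : ℝ) :
    z - Complex.exp (t * I) ≠ 0 := by
  intro h
  have := sub_eq_zero.mp h
  rw [this, abs_exp_mul_I] at hz
  exact lt_irrefl 1 hz

lemma poisson_continuous (z : ℂ) (hz : ‖z‖ < 1) :
    Continuous (poisson z) := by
  unfold poisson
  apply Continuous.div continuous_const
  · exact ((continuous_norm.comp (continuous_const.sub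
      (Complex.continuous_exp.comp (Complex.continuous_ofReal.mul continuous_const)))).pow 2)
  · intro t
    exact pow_ne_zero 2 (norm_ne_zero_iff.mpr (exp_mul_I_ne z hz t))

lemma poisson_periodic (z : ℂ) (θ : ℝ) (k : ℤ) :
    poisson z (θ + 2 * Real.pi * k) = poisson z θ := by
  unfold poisson
  have h1 : Complex.exp (((θ + 2 * Real.pi * k : ℝ) : ℂ) * I) = Complex.exp ((θ : ℂ) * I) := by
    push_cast
    rw [add_mul, Complex.exp_add,
      show ((2:ℂ) * Real.pi * k * I) = k * (2 * Real.pi * I) by ring,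
      Complex.exp_int_mul_two_pi_mul_I, mul_one]
  rw [h1]

lemma one_sub_conj_ne (a u : ℂ) (ha : ‖a‖ < 1) (hu : ‖u‖ ≤ 1) :
    1 - (starRingEnd ℂ) a * u ≠ 0 := by
  intro h
  have h1 : (1:ℂ) = (starRingEnd ℂ) a * u := sub_eq_zero.mp h
  have h2 : (1:ℝ) = ‖a‖ * ‖u‖ := by
    simpa [map_mul] using congrArg (‖·‖) h1
  nlinarith [norm_nonneg u, norm_nonneg a]

lemma normSq_identity (a u : ℂ) :
    Complex.normSq (1 - (starRingEnd ℂ) a * u) - Complex.normSq (u - a)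
      = (1 - Complex.normSq a) * (1 - Complex.normSq u) := by
  simp only [Complex.normSq_apply, Complex.sub_re, Complex.sub_im, Complex.mul_re,
    Complex.mul_im, Complex.one_re, Complex.one_im, Complex.conj_re, Complex.conj_im]
  ring

lemma mobius_sub (a : ℂ) (β : ℝ) (u v : ℂ) (hu : 1 - (starRingEnd ℂ) a * u ≠ 0)
    (hv : 1 - (starRingEnd ℂ) a * v ≠ 0) :
    Complex.exp (β*I)*(u-a)/(1-(starRingEnd ℂ) a*u) - Complex.exp (β*I)*(v-a)/(1-(starRingEnd ℂ) a*v)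
    = Complex.exp (β*I) * (1 - (starRingEnd ℂ) a * a) * (u - v) /
      ((1-(starRingEnd ℂ) a*u)*(1-(starRingEnd ℂ) a*v)) := by
  rw [div_sub_div _ _ hu hv]
  congr 1
  ring

lemma normSq_exp_mul_I (t : ℝ) : Complex.normSq (Complex.exp (t*I)) = 1 := by
  rw [← Complex.sq_norm]
  simp [Complex.norm_exp]

lemma normSq_M (a : ℂ) (β : ℝ) (u : ℂ) :
    Complex.normSq (Complex.exp ((β:ℂ)*I) * (u - a) / (1 - (starRingEnd ℂ) a * u)) =
      Complex.normSq (u-a) / Complex.normSq (1 - (starRingEnd ℂ) a * u) := by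
  rw [Complex.normSq_div, Complex.normSq_mul, normSq_exp_mul_I, one_mul]

lemma normSq_lt_one (u : ℂ) (hu : ‖u‖ < 1) : Complex.normSq u < 1 := by
  rw [← Complex.sq_norm]
  nlinarith [norm_nonneg u]

lemma abs_M_lt (a : ℂ) (ha : ‖a‖ < 1) (β : ℝ) (u : ℂ) (hu : ‖u‖ < 1) :
    ‖Complex.exp ((β:ℂ)*I) * (u - a) / (1 - (starRingEnd ℂ) a * u)‖ < 1 := by
  have hau := one_sub_conj_ne a u ha hu.le
  have hpos : 0 < Complex.normSq (1 - (starRingEnd ℂ) a * u) := Complex.normSq_pos.mpr hau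
  have hns : Complex.normSq (Complex.exp ((β:ℂ)*I) * (u - a) / (1 - (starRingEnd ℂ) a * u)) < 1 := by
    rw [normSq_M, div_lt_one hpos]
    nlinarith [normSq_identity a u, normSq_lt_one a ha, normSq_lt_one u hu]
  rw [← Complex.sq_norm] at hns
  nlinarith [norm_nonneg (Complex.exp ((β:ℂ)*I) * (u - a) / (1 - (starRingEnd ℂ) a * u))]

lemma one_sub_conj_mul_self (a : ℂ) :
    1 - (starRingEnd ℂ) a * a = ((1 - Complex.normSq a : ℝ) : ℂ) := by
  rw [mul_comm, Complex.mul_conj]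
  push_cast
  ring

lemma kernel_transform (a : ℂ) (ha : ‖a‖ < 1) (β : ℝ) (u : ℂ) (hu : ‖u‖ < 1)
    (t : ℝ) :
    (1 - Complex.normSq a) / Complex.normSq (1 - (starRingEnd ℂ) a * Complex.exp ((t:ℂ)*I)) *
    ((1 / (2 * Real.pi)) *
      (1 - ‖Complex.exp ((β:ℂ)*I) * (u - a) / (1 - (starRingEnd ℂ) a * u)‖ ^ 2) /
      ‖Complex.exp ((β:ℂ)*I) * (u - a) / (1 - (starRingEnd ℂ) a * u)
        - Complex.exp ((β:ℂ)*I) * (Complex.exp ((t:ℂ)*I) - a) /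
          (1 - (starRingEnd ℂ) a * Complex.exp ((t:ℂ)*I))‖ ^ 2)
    = poisson u t := by
  set e := Complex.exp ((t:ℂ)*I) with he_def
  have he : Complex.normSq e = 1 := normSq_exp_mul_I t
  have habse : ‖e‖ = 1 := by
    rw [← Complex.sq_norm] at he; nlinarith [norm_nonneg e]
  have hau := one_sub_conj_ne a u ha hu.le
  have hae := one_sub_conj_ne a e ha habse.le
  have hnsa : 0 < 1 - Complex.normSq a := by linarith [normSq_lt_one a ha]
  have hnsu : 0 < 1 - Complex.normSq u := by linarith [normSq_lt_one u hu]
  have hpu : 0 < Complex.normSq (1 - (starRingEnd ℂ) a * u) := Complex.normSq_pos.mpr hau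
  have hpe : 0 < Complex.normSq (1 - (starRingEnd ℂ) a * e) := Complex.normSq_pos.mpr hae
  have hue : u - e ≠ 0 := by
    intro h
    rw [sub_eq_zero.mp h, habse] at hu
    exact lt_irrefl 1 hu
  have hpue : 0 < Complex.normSq (u - e) := Complex.normSq_pos.mpr hue
  have h1 : 1 - ‖Complex.exp ((β:ℂ)*I) * (u - a) / (1 - (starRingEnd ℂ) a * u)‖ ^ 2
      = (1 - Complex.normSq a) * (1 - Complex.normSq u) /
        Complex.normSq (1 - (starRingEnd ℂ) a * u) := by
    rw [Complex.sq_norm, normSq_M, eq_div_iff (ne_of_gt hpu), sub_mul, div_mul_cancel₀]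
    · linarith [normSq_identity a u]
    · exact ne_of_gt hpu
  have h2 : ‖Complex.exp ((β:ℂ)*I) * (u - a) / (1 - (starRingEnd ℂ) a * u)
        - Complex.exp ((β:ℂ)*I) * (e - a) / (1 - (starRingEnd ℂ) a * e)‖ ^ 2
      = (1 - Complex.normSq a)^2 * Complex.normSq (u - e) /
        (Complex.normSq (1 - (starRingEnd ℂ) a * u) * Complex.normSq (1 - (starRingEnd ℂ) a * e)) := by
    rw [mobius_sub a β u e hau hae, Complex.sq_norm, Complex.normSq_div, Complex.normSq_mul,
      Complex.normSq_mul, normSq_exp_mul_I, one_mul, one_sub_conj_mul_self,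
      Complex.normSq_mul, Complex.normSq_ofReal]
    ring_nf
  rw [h1, h2]
  unfold poisson
  rw [← he_def, Complex.sq_norm u, Complex.sq_norm (u - e)]
  have hpi : Real.pi ≠ 0 := Real.pi_ne_zero
  field_simp


lemma w_slit (a : ℂ) (ha : ‖a‖ < 1) (t : ℝ) :
    1 - (starRingEnd ℂ) a * Complex.exp ((t:ℂ)*I) ∈ Complex.slitPlane := by
  rw [Complex.mem_slitPlane_iff]
  left
  have h1 : ((starRingEnd ℂ) a * Complex.exp ((t:ℂ)*I)).re ≤ ‖a‖ := by
    calc ((starRingEnd ℂ) a * Complex.exp ((t:ℂ)*I)).re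
        ≤ ‖(starRingEnd ℂ) a * Complex.exp ((t:ℂ)*I)‖ := Complex.re_le_norm _
      _ = ‖a‖ := by simp [map_mul, Complex.norm_exp]
  simp only [Complex.sub_re, Complex.one_re]
  linarith

lemma hasDerivAt_w (a : ℂ) (t : ℝ) :
    HasDerivAt (fun s : ℝ => 1 - (starRingEnd ℂ) a * Complex.exp ((s:ℂ)*I))
      (-((starRingEnd ℂ) a * (Complex.exp ((t:ℂ)*I) * I))) t := by
  have h0 : HasDerivAt (fun s : ℂ => Complex.exp (s*I)) (Complex.exp ((t:ℂ)*I)*I) ((t:ℝ):ℂ) := by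
    simpa using ((hasDerivAt_id ((t:ℝ):ℂ)).mul_const I).cexp
  have h1 := h0.comp_ofReal
  simpa using (h1.const_mul ((starRingEnd ℂ) a)).const_sub 1

lemma hasDerivAt_eta0 (a : ℂ) (ha : ‖a‖ < 1) (β : ℝ) (t : ℝ) :
    HasDerivAt (fun s : ℝ => s + β - 2*(Complex.log (1 - (starRingEnd ℂ) a * Complex.exp ((s:ℂ)*I))).im)
      ((1 - Complex.normSq a) / Complex.normSq (1 - (starRingEnd ℂ) a * Complex.exp ((t:ℂ)*I))) t := by
  have hslit := w_slit a ha t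
  have hwne : 1 - (starRingEnd ℂ) a * Complex.exp ((t:ℂ)*I) ≠ 0 := Complex.slitPlane_ne_zero hslit
  have hL := (Complex.hasDerivAt_log hslit).comp t (hasDerivAt_w a t)
  have hd := ((hasDerivAt_id t).add_const β).sub (hL.cim.const_mul 2)
  refine hd.congr_deriv (Eq.symm ?_)
  set e := Complex.exp ((t:ℂ)*I) with he_def
  set A := (starRingEnd ℂ) a with hA_def
  set w := 1 - A * e with hw_def
  have hnse : Complex.normSq e = 1 := by
    rw [← Complex.sq_norm]; simp [he_def, Complex.norm_exp]
  have h6 : e * (starRingEnd ℂ) e = 1 := by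
    rw [Complex.mul_conj, hnse]; norm_num
  have h7 : a * (starRingEnd ℂ) a = ((Complex.normSq a : ℝ) : ℂ) := Complex.mul_conj a
  have hnsw : Complex.normSq w ≠ 0 := (Complex.normSq_pos.mpr hwne).ne'
  have hcw : (starRingEnd ℂ) w * -(A*(e*I)) = (((Complex.normSq a : ℝ):ℂ) - A*e) * I := by
    rw [hw_def, hA_def]
    simp only [map_sub, map_one, map_mul, Complex.conj_conj]
    linear_combination ((starRingEnd ℂ) e * e * Complex.I) * h7 +
      (((Complex.normSq a : ℝ):ℂ) * Complex.I) * h6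
  have hIm : (w⁻¹ * -(A*(e*I))).im = (Complex.normSq a - (A*e).re) / Complex.normSq w := by
    rw [Complex.inv_def,
        show (starRingEnd ℂ) w * ((((Complex.normSq w)⁻¹ : ℝ)):ℂ) * -(A*(e*I))
            = ((starRingEnd ℂ) w * -(A*(e*I))) * ((((Complex.normSq w)⁻¹ : ℝ)):ℂ) from by ring,
        hcw, Complex.mul_im]
    simp only [Complex.ofReal_re, Complex.ofReal_im, mul_zero, add_zero, Complex.mul_im,
      Complex.sub_re, Complex.sub_im, Complex.I_re, Complex.I_im, Complex.ofReal_re,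
      Complex.ofReal_im, mul_one, mul_zero, zero_sub, neg_zero, zero_add]
    ring
  rw [hIm]
  have hcomp : e.re*e.re + e.im*e.im = 1 := by
    have h8 := Complex.normSq_apply e
    rw [hnse] at h8
    linarith [h8]
  have hnsweq : Complex.normSq w = 1 - 2*(A*e).re + Complex.normSq a := by
    simp only [hw_def, hA_def, Complex.normSq_apply, Complex.sub_re, Complex.sub_im,
      Complex.one_re, Complex.one_im, Complex.mul_re, Complex.mul_im, Complex.conj_re,
      Complex.conj_im]
    linear_combination (a.re*a.re + a.im*a.im) * hcomp
  have hnsw2 : (1:ℝ) - 2*(A*e).re + Complex.normSq a ≠ 0 := hnsweq ▸ hnsw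
  rw [hnsweq]
  generalize hg : ((A : ℂ)*e).re = r at hnsw2 ⊢
  field_simp
  ring


lemma exp_eta0 (a : ℂ) (ha : ‖a‖ < 1) (β : ℝ) (t : ℝ) :
    Complex.exp (((t + β - 2*(Complex.log (1 - (starRingEnd ℂ) a * Complex.exp ((t:ℂ)*I))).im : ℝ) : ℂ) * I)
    = Complex.exp ((β:ℂ)*I) * (Complex.exp ((t:ℂ)*I) - a) /
        (1 - (starRingEnd ℂ) a * Complex.exp ((t:ℂ)*I)) := by
  set e := Complex.exp ((t:ℂ)*I) with he_def
  set w := 1 - (starRingEnd ℂ) a * e with hw_def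
  have hwne : w ≠ 0 := Complex.slitPlane_ne_zero (w_slit a ha t)
  set L := Complex.log w with hL_def
  have hexpL : Complex.exp L = w := Complex.exp_log hwne
  have h3 : ((-(2*L.im) : ℝ) : ℂ) * I = (starRingEnd ℂ) L - L := by
    apply Complex.ext <;>
      simp [Complex.mul_re, Complex.mul_im, Complex.conj_re, Complex.conj_im] <;> ring
  have hkey : Complex.exp (((-(2*L.im) : ℝ) : ℂ) * I) = (starRingEnd ℂ) w / w := by
    rw [h3, Complex.exp_sub, Complex.exp_conj, hexpL]
  have hsplit : ((t + β - 2*L.im : ℝ) : ℂ) * I = (t:ℂ)*I + (β:ℂ)*I + ((-(2*L.im) : ℝ):ℂ)*I := by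
    push_cast
    ring
  rw [hsplit, Complex.exp_add, Complex.exp_add, hkey]
  have hee : e * Complex.exp (-((t:ℂ)*I)) = 1 := by
    rw [he_def, ← Complex.exp_add]
    simp
  have hconjw : (starRingEnd ℂ) w = 1 - a * Complex.exp (-((t:ℂ)*I)) := by
    rw [hw_def]
    simp only [map_sub, map_one, map_mul, Complex.conj_conj]
    congr 1
    rw [← Complex.exp_conj]
    congr 1
    simp [Complex.ext_iff]
  have h4 : e * (starRingEnd ℂ) w = e - a := by
    rw [hconjw]
    have : e * (a * Complex.exp (-((t:ℂ)*I))) = a * (e * Complex.exp (-((t:ℂ)*I))) := by ring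
    rw [mul_sub, mul_one, this, hee, mul_one]
  rw [← h4]
  ring


lemma eta0_continuous (a : ℂ) (ha : ‖a‖ < 1) (β : ℝ) :
    Continuous (fun s : ℝ => s + β - 2*(Complex.log (1 - (starRingEnd ℂ) a * Complex.exp ((s:ℂ)*I))).im) := by
  apply Continuous.sub (continuous_id.add continuous_const)
  apply Continuous.mul continuous_const
  apply Complex.continuous_im.comp
  rw [continuous_iff_continuousAt]
  intro t
  apply ContinuousAt.clog
  · exact (continuous_const.sub (continuous_const.mul
      (Complex.continuous_exp.comp (Complex.continuous_ofReal.mul continuous_const)))).continuousAt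
  · exact w_slit a ha t

lemma lift_const (η η₀ : ℝ → ℝ) (hη : Continuous η) (hη₀ : Continuous η₀)
    (h : ∀ t, Complex.exp ((η t : ℂ) * I) = Complex.exp ((η₀ t : ℂ) * I)) :
    ∃ k : ℤ, ∀ t, η t = η₀ t + 2 * Real.pi * k := by
  have hk : ∀ t, ∃ k : ℤ, η t - η₀ t = 2 * Real.pi * k := by
    intro t
    have h1 := h t
    rw [Complex.exp_eq_exp_iff_exists_int] at h1
    obtain ⟨n, hn⟩ := h1
    refine ⟨n, ?_⟩
    have h2 := congrArg Complex.im hn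
    simp only [Complex.mul_im, Complex.ofReal_re, Complex.ofReal_im, Complex.I_re, Complex.I_im,
      Complex.add_im, Complex.mul_re, Complex.intCast_im, Complex.intCast_re,
      Complex.re_ofNat, Complex.im_ofNat] at h2
    push_cast at h2 ⊢
    nlinarith [h2]
  set d := fun t => η t - η₀ t with hd_def
  have hdc : Continuous d := hη.sub hη₀
  set c := d 0 with hc_def
  have hconst : ∀ t, d t = c := by
    have hA : (d ⁻¹' {c}) = d ⁻¹' (Metric.ball c (2 * Real.pi)) := by
      apply Set.Subset.antisymm
      · intro t ht
        simp only [Set.mem_preimage, Set.mem_singleton_iff] at ht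
        simp only [Set.mem_preimage, Metric.mem_ball, ht, dist_self]
        positivity
      · intro t ht
        simp only [Set.mem_preimage, Metric.mem_ball, Real.dist_eq] at ht
        simp only [Set.mem_preimage, Set.mem_singleton_iff]
        obtain ⟨kt, hkt⟩ := hk t
        obtain ⟨k0, hk0⟩ := hk 0
        have hceq : c = 2 * Real.pi * k0 := hk0
        have hkt' : d t = 2 * Real.pi * kt := hkt
        rw [hkt', hceq] at ht ⊢
        have habs : |((kt - k0 : ℤ) : ℝ)| < 1 := by
          rw [abs_lt] at ht ⊢
          push_cast at ht ⊢
          constructor <;> nlinarith [Real.pi_gt_three, ht.1, ht.2]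
        have h5 : |kt - k0| < 1 := by exact_mod_cast (by rwa [← Int.cast_abs] at habs :
            ((|kt - k0| : ℤ) : ℝ) < 1)
        have h6 : kt - k0 = 0 := Int.abs_lt_one_iff.mp h5
        have h7 : kt = k0 := by omega
        rw [h7]
    have hclopen : IsClopen (d ⁻¹' {c}) := by
      constructor
      · exact isClosed_singleton.preimage hdc
      · rw [hA]
        exact Metric.isOpen_ball.preimage hdc
    have huniv := hclopen.eq_univ ⟨0, rfl⟩
    intro t
    exact (huniv ▸ Set.mem_univ t : t ∈ d ⁻¹' {c})
  obtain ⟨k0, hk0⟩ := hk 0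
  refine ⟨k0, fun t => ?_⟩
  have h7 : η t - η₀ t = η 0 - η₀ 0 := hconst t
  linarith [h7, hk0]


lemma key_integral (a : ℂ) (ha : ‖a‖ < 1) (β : ℝ) (M : ℂ → ℂ)
    (hM : ∀ z : ℂ, M z = Complex.exp (β * Complex.I) * (z - a) / (1 - (starRingEnd ℂ) a * z))
    (η : ℝ → ℝ) (hη : Continuous η)
    (hlift : ∀ t : ℝ, Complex.exp ((η t : ℂ) * Complex.I) = M (Complex.exp (t * Complex.I)))
    (u : ℂ) (hu : ‖u‖ < 1) (α γ : ℝ) :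
    (∫ s in (η α)..(η γ), poisson (M u) s) = ∫ t in α..γ, poisson u t := by
  set η₀ := fun s : ℝ => s + β -
    2*(Complex.log (1 - (starRingEnd ℂ) a * Complex.exp ((s:ℂ)*I))).im with hη₀def
  have hlift0 : ∀ t : ℝ, Complex.exp ((η₀ t : ℂ) * I) = M (Complex.exp ((t:ℂ)*I)) := by
    intro t
    rw [hM, hη₀def]
    exact exp_eta0 a ha β t
  obtain ⟨k, hk⟩ := lift_const η η₀ hη (eta0_continuous a ha β)
    (fun t => by rw [hlift t, hlift0 t])
  have hMu : ‖M u‖ < 1 := by rw [hM]; exact abs_M_lt a ha β u hu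
  have hcontP : Continuous (poisson u) := poisson_continuous u hu
  have hcontQ : Continuous (poisson (M u)) := poisson_continuous _ hMu
  have hshift : (∫ s in (η α)..(η γ), poisson (M u) s)
      = ∫ s in (η₀ α)..(η₀ γ), poisson (M u) s := by
    rw [hk α, hk γ,
      ← intervalIntegral.integral_comp_add_right (fun s => poisson (M u) s) (2*Real.pi*k)]
    simp only [poisson_periodic]
  rw [hshift]
  set Φ := fun x : ℝ => ∫ s in (0:ℝ)..x, poisson u s with hΦdef
  set Ψ := fun x : ℝ => ∫ s in (0:ℝ)..x, poisson (M u) s with hΨdef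
  have hΦ : ∀ x, HasDerivAt Φ (poisson u x) x :=
    fun x => (hcontP.integral_hasStrictDerivAt 0 x).hasDerivAt
  have hΨ : ∀ x, HasDerivAt Ψ (poisson (M u) x) x :=
    fun x => (hcontQ.integral_hasStrictDerivAt 0 x).hasDerivAt
  have hη₀d : ∀ t : ℝ, HasDerivAt η₀
      ((1 - Complex.normSq a) / Complex.normSq (1 - (starRingEnd ℂ) a * Complex.exp ((t:ℂ)*I))) t :=
    fun t => hasDerivAt_eta0 a ha β t
  have hH : ∀ t, HasDerivAt (fun t => Ψ (η₀ t) - Φ t) 0 t := by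
    intro t
    have h1 := (hΨ (η₀ t)).comp t (hη₀d t)
    have h2 := h1.sub (hΦ t)
    refine h2.congr_deriv (Eq.symm ?_)
    have h4 : poisson (M u) (η₀ t)
        = (1 / (2 * Real.pi)) *
          (1 - ‖Complex.exp ((β:ℂ)*I) * (u - a) / (1 - (starRingEnd ℂ) a * u)‖ ^ 2) /
          ‖Complex.exp ((β:ℂ)*I) * (u - a) / (1 - (starRingEnd ℂ) a * u)
            - Complex.exp ((β:ℂ)*I) * (Complex.exp ((t:ℂ)*I) - a) /
              (1 - (starRingEnd ℂ) a * Complex.exp ((t:ℂ)*I))‖ ^ 2 := by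
      unfold poisson
      rw [hlift0 t, hM u, hM (Complex.exp ((t:ℂ)*I))]
    have h3 := kernel_transform a ha β u hu t
    rw [h4] at *
    linarith [h3, mul_comm (poisson (M u) (η₀ t))
      ((1 - Complex.normSq a) / Complex.normSq (1 - (starRingEnd ℂ) a * Complex.exp ((t:ℂ)*I)))]
  have hdiff : Differentiable ℝ (fun t => Ψ (η₀ t) - Φ t) := fun x => (hH x).differentiableAt
  have hzero : ∀ x, deriv (fun t => Ψ (η₀ t) - Φ t) x = 0 := fun x => (hH x).deriv
  have hconst : Ψ (η₀ γ) - Φ γ = Ψ (η₀ α) - Φ α := is_const_of_deriv_eq_zero hdiff hzero γ α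
  have h8 : (∫ s in (η₀ α)..(η₀ γ), poisson (M u) s) = Ψ (η₀ γ) - Ψ (η₀ α) :=
    (intervalIntegral.integral_interval_sub_left (hcontQ.intervalIntegrable _ _)
      (hcontQ.intervalIntegrable _ _)).symm
  have h9 : (∫ t in α..γ, poisson u t) = Φ γ - Φ α :=
    (intervalIntegral.integral_interval_sub_left (hcontP.intervalIntegrable _ _)
      (hcontP.intervalIntegrable _ _)).symm
  rw [h8, h9]
  linarith [hconst]

end AuxConformal

/-- **Conformal invariance of the reduced `f`-divergence distance.**
Let `M(z) = e^{iβ}·(z − a)/(1 − conj(a)·z)` with `|a| < 1`, `β ∈ ℝ`, and let `η` be a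
continuous lift of the induced boundary circle map (`e^{iη(t)} = M(e^{it})`).  Given a
partition `−π < θ₁ < ⋯ < θ_n ≤ π` of the circle with `θ_{n+1} := θ₁ + 2π`, and `f`
strictly convex on `(0,∞)` with `f(1) = 0`, write `φ_j(u) = ∫_{θ_j}^{θ_{j+1}} P(u,t) dt`
and `φ̃_j(u) = ∫_{η(θ_j)}^{η(θ_{j+1})} P(u,t) dt`.  Then for all `z, y` in the open unit
disk,
`∑_{j=1}^n φ̃_j(M z)·f(φ̃_j(M y)/φ̃_j(M z)) = ∑_{j=1}^n φ_j(z)·f(φ_j(y)/φ_j(z))`. -/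
theorem reduced_divergence_conformal_invariance
    (a : ℂ) (ha : ‖a‖ < 1) (β : ℝ)
    (M : ℂ → ℂ)
    (hM : ∀ z : ℂ, M z = Complex.exp (β * Complex.I) * (z - a) / (1 - (starRingEnd ℂ) a * z))
    (η : ℝ → ℝ) (hη : Continuous η)
    (hlift : ∀ t : ℝ, Complex.exp ((η t : ℂ) * Complex.I) = M (Complex.exp (t * Complex.I)))
    (n : ℕ) (θ : ℕ → ℝ)
    (hθ1 : -Real.pi < θ 1) (hθn : θ n ≤ Real.pi)
    (hmono : ∀ j, 1 ≤ j → j < n → θ j < θ (j + 1))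
    (hper : θ (n + 1) = θ 1 + 2 * Real.pi)
    (f : ℝ → ℝ) (hf : StrictConvexOn ℝ (Set.Ioi 0) f) (hf1 : f 1 = 0)
    (φ φt : ℕ → ℂ → ℝ)
    (hφ : ∀ j u, φ j u = ∫ t in (θ j)..(θ (j + 1)), poisson u t)
    (hφt : ∀ j u, φt j u = ∫ t in (η (θ j))..(η (θ (j + 1))), poisson u t) :
    ∀ z : ℂ, ‖z‖ < 1 → ∀ y : ℂ, ‖y‖ < 1 →
      ∑ j ∈ Finset.Icc 1 n, φt j (M z) * f (φt j (M y) / φt j (M z)) =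
      ∑ j ∈ Finset.Icc 1 n, φ j z * f (φ j y / φ j z) := by
  intro z hz y hy
  apply Finset.sum_congr rfl
  intro j _
  rw [hφt, hφt, hφ, hφ,
    key_integral a ha β M hM η hη hlift z hz (θ j) (θ (j+1)),
    key_integral a ha β M hM η hη hlift y hy (θ j) (θ (j+1))]
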